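/- For every positive integer m, the group SL₂(ℤ[1/m]) is generated by the two matrices A = [[1,0],[1,1]] and Q = [[1,-1/m],[0,1]]. -/

import Mathlib

/-- The subring ℤ[1/m] of ℚ. -/
def Zinv (m : ℕ) : Subring ℚ := Subring.closure {((m : ℚ))⁻¹}

lemma invMem (m : ℕ) : ((m : ℚ))⁻¹ ∈ Zinv m :=
  Subring.subset_closure (Set.mem_singleton _)

def matA (m : ℕ) : Matrix.SpecialLinearGroup (Fin 2) (Zinv m) :=
  ⟨!![1, 0; 1, 1], by simp [Matrix.det_fin_two_of]⟩

def matQ (m : ℕ) : Matrix.SpecialLinearGroup (Fin 2) (Zinv m) :=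
  ⟨!![1, ⟨-((m : ℚ))⁻¹, neg_mem (invMem m)⟩; 0, 1], by simp [Matrix.det_fin_two_of]⟩

def matB (m : ℕ) : Matrix.SpecialLinearGroup (Fin 2) (Zinv m) :=
  ⟨!![0, 1; -1, 0], by simp [Matrix.det_fin_two_of]⟩

def matU (m : ℕ) (hm : 0 < m) : Matrix.SpecialLinearGroup (Fin 2) (Zinv m) :=
  ⟨!![(m : Zinv m), 0; 0, ⟨((m : ℚ))⁻¹, invMem m⟩], by
    have hm0 : (m : ℚ) ≠ 0 := Nat.cast_ne_zero.2 hm.ne'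
    apply Subtype.ext
    simp [Matrix.det_fin_two_of, mul_inv_cancel₀ hm0]⟩

def gene (m : ℕ) : Zinv m := ⟨((m : ℚ))⁻¹, invMem m⟩
def Um (m : ℕ) (x : Zinv m) : Matrix.SpecialLinearGroup (Fin 2) (Zinv m) :=
  ⟨!![1, x; 0, 1], by simp [Matrix.det_fin_two_of]⟩
def Lm (m : ℕ) (x : Zinv m) : Matrix.SpecialLinearGroup (Fin 2) (Zinv m) :=
  ⟨!![1, 0; x, 1], by simp [Matrix.det_fin_two_of]⟩

lemma Um_mul (m : ℕ) (x y : Zinv m) : Um m x * Um m y = Um m (x + y) := by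
  ext i j
  simp only [Matrix.SpecialLinearGroup.coe_mul]
  fin_cases i <;> fin_cases j <;>
    simp [Um, Matrix.mul_apply, Fin.sum_univ_two, add_comm]
lemma Lm_mul (m : ℕ) (x y : Zinv m) : Lm m x * Lm m y = Lm m (x + y) := by
  ext i j
  simp only [Matrix.SpecialLinearGroup.coe_mul]
  fin_cases i <;> fin_cases j <;>
    simp [Lm, Matrix.mul_apply, Fin.sum_univ_two, add_comm]
lemma Um_zero (m : ℕ) : Um m 0 = 1 := by
  ext i j
  fin_cases i <;> fin_cases j <;> simp [Um]
lemma Lm_zero (m : ℕ) : Lm m 0 = 1 := by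
  ext i j
  fin_cases i <;> fin_cases j <;> simp [Lm]
lemma Um_inv (m : ℕ) (x : Zinv m) : (Um m x)⁻¹ = Um m (-x) :=
  inv_eq_of_mul_eq_one_right (by rw [Um_mul, add_neg_cancel, Um_zero])
lemma Lm_inv (m : ℕ) (x : Zinv m) : (Lm m x)⁻¹ = Lm m (-x) :=
  inv_eq_of_mul_eq_one_right (by rw [Lm_mul, add_neg_cancel, Lm_zero])
lemma matQ_eq (m : ℕ) : matQ m = Um m (-(gene m)) := by
  ext i j
  fin_cases i <;> fin_cases j <;> simp [matQ, Um, gene]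
lemma matA_eq (m : ℕ) : matA m = Lm m 1 := by
  ext i j
  fin_cases i <;> fin_cases j <;> simp [matA, Lm]
-- I3 : B identity
lemma B_eq (m : ℕ) : Um m 1 * Lm m (-1) * Um m 1 = matB m := by
  ext i j
  simp only [Matrix.SpecialLinearGroup.coe_mul]
  fin_cases i <;> fin_cases j <;>
    simp [Um, Lm, matB, Matrix.mul_apply, Fin.sum_univ_two]
-- I5 : B conj
lemma B_conj (m : ℕ) (x : Zinv m) : matB m * Um m x = Lm m (-x) * matB m := by
  ext i j
  simp only [Matrix.SpecialLinearGroup.coe_mul]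
  fin_cases i <;> fin_cases j <;>
    simp [Um, Lm, matB, Matrix.mul_apply, Fin.sum_univ_two]

lemma gene_mul (m : ℕ) (hm : 0 < m) : (m : Zinv m) * gene m = 1 := by
  have hm0 : (m : ℚ) ≠ 0 := Nat.cast_ne_zero.2 hm.ne'
  apply Subtype.ext
  push_cast [gene]
  exact mul_inv_cancel₀ hm0
lemma U_conj (m : ℕ) (hm : 0 < m) (x : Zinv m) :
    matU m hm * Um m x = Um m ((m : Zinv m) ^ 2 * x) * matU m hm := by
  have hm0 : (m : ℚ) ≠ 0 := Nat.cast_ne_zero.2 hm.ne'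
  ext i j
  simp only [Matrix.SpecialLinearGroup.coe_mul]
  fin_cases i <;> fin_cases j <;>
    · simp [Um, matU, gene, Matrix.mul_apply, Fin.sum_univ_two]
      try field_simp
      try ring
lemma matU_eq (m : ℕ) (hm : 0 < m) :
    Um m (m : Zinv m) * Lm m (-(gene m)) * Um m (m : Zinv m) = matU m hm * matB m := by
  have hm0 : (m : ℚ) ≠ 0 := Nat.cast_ne_zero.2 hm.ne'
  ext i j
  simp only [Matrix.SpecialLinearGroup.coe_mul]
  fin_cases i <;> fin_cases j <;>
    · simp [Um, Lm, matU, matB, gene, Matrix.mul_apply, Fin.sum_univ_two,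
        mul_inv_cancel₀ hm0, inv_mul_cancel₀ hm0]

lemma Um_zpow (m : ℕ) (x : Zinv m) (n : ℤ) : Um m x ^ n = Um m (n • x) := by
  induction n using Int.induction_on with
  | zero => simp [Um_zero]
  | succ k ih =>
      rw [zpow_add_one, ih, Um_mul]
      congr 1
      rw [add_zsmul, one_zsmul]
  | pred k ih =>
      rw [zpow_sub_one, ih, Um_inv, Um_mul]
      congr 1
      simp only [zsmul_eq_mul]
      push_cast
      ring

lemma Zinv_rep (m : ℕ) (x : Zinv m) : ∃ (k : ℤ) (N : ℕ), (x : ℚ) * m ^ N = k := by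
  obtain ⟨x, hx⟩ := x
  refine Subring.closure_induction ?_ ?_ ?_ ?_ ?_ ?_ hx
  · rintro y ⟨rfl⟩
    by_cases h : (m:ℚ) = 0
    · exact ⟨0, 0, by simp [h]⟩
    · exact ⟨1, 1, by simp [inv_mul_cancel₀ h]⟩
  · exact ⟨0, 0, by simp⟩
  · exact ⟨1, 0, by simp⟩
  · intro a b ha hb iha ihb
    obtain ⟨k1, N1, h1⟩ := iha
    obtain ⟨k2, N2, h2⟩ := ihb
    exact ⟨k1 * m ^ N2 + k2 * m ^ N1, N1 + N2, by push_cast; rw [← h1, ← h2]; ring⟩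
  · intro a ha ih
    obtain ⟨k, N, h⟩ := ih
    exact ⟨-k, N, by push_cast; rw [← h]; ring⟩
  · intro a b ha hb iha ihb
    obtain ⟨k1, N1, h1⟩ := iha
    obtain ⟨k2, N2, h2⟩ := ihb
    exact ⟨k1 * k2, N1 + N2, by push_cast; rw [← h1, ← h2]; ring⟩

abbrev HH (m : ℕ) := Subgroup.closure {matA m, matQ m}

lemma hA_mem (m : ℕ) : matA m ∈ HH m := Subgroup.subset_closure (by simp)
lemma hQ_mem (m : ℕ) : matQ m ∈ HH m := Subgroup.subset_closure (by simp)

lemma hUden (m : ℕ) (hm : 0 < m) (k : ℤ) (x : Zinv m) (hx : (x : ℚ) * m = k) :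
    Um m x ∈ HH m := by
  have hm0 : (m : ℚ) ≠ 0 := Nat.cast_ne_zero.2 hm.ne'
  have hx' : x = (-k) • (-(gene m)) := by
    apply Subtype.ext
    push_cast [gene, zsmul_eq_mul]
    field_simp
    linarith [hx]
  have e : Um m x = (matQ m) ^ (-k) := by
    rw [matQ_eq, Um_zpow, hx']
  rw [e]
  exact zpow_mem (hQ_mem m) _

lemma hUm1 (m : ℕ) (hm : 0 < m) : Um m 1 ∈ HH m := by
  refine hUden m hm m 1 ?_
  push_cast
  simp

lemma hUmm (m : ℕ) (hm : 0 < m) : Um m (m : Zinv m) ∈ HH m := by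
  refine hUden m hm (m * m) (m : Zinv m) ?_
  push_cast
  ring

lemma hB_mem (m : ℕ) (hm : 0 < m) : matB m ∈ HH m := by
  rw [← B_eq]
  have hA : Lm m (-1) ∈ HH m := by
    have e : Lm m (-1) = (matA m)⁻¹ := by rw [matA_eq, Lm_inv]
    rw [e]; exact inv_mem (hA_mem m)
  exact mul_mem (mul_mem (hUm1 m hm) hA) (hUm1 m hm)

lemma hLB (m : ℕ) (hm : 0 < m) (x : Zinv m) (h : Um m x ∈ HH m) : Lm m (-x) ∈ HH m := by
  have e : Lm m (-x) = matB m * Um m x * (matB m)⁻¹ := by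
    rw [B_conj, mul_inv_cancel_right]
  rw [e]
  exact mul_mem (mul_mem (hB_mem m hm) h) (inv_mem (hB_mem m hm))

lemma hU_mem (m : ℕ) (hm : 0 < m) : matU m hm ∈ HH m := by
  have e : matU m hm = Um m (m : Zinv m) * Lm m (-(gene m)) * Um m (m : Zinv m) * (matB m)⁻¹ := by
    rw [matU_eq m hm, mul_inv_cancel_right]
  rw [e]
  have hg : Um m (gene m) ∈ HH m := by
    refine hUden m hm 1 (gene m) ?_
    have hm0 : (m : ℚ) ≠ 0 := Nat.cast_ne_zero.2 hm.ne'
    push_cast [gene]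
    exact inv_mul_cancel₀ hm0
  exact mul_mem (mul_mem (mul_mem (hUmm m hm) (hLB m hm _ hg)) (hUmm m hm))
    (inv_mem (hB_mem m hm))

lemma hU_all_aux (m : ℕ) (hm : 0 < m) :
    ∀ N : ℕ, ∀ (x : Zinv m) (k : ℤ), (x : ℚ) * m ^ N = k → Um m x ∈ HH m := by
  intro N
  induction N using Nat.strong_induction_on with
  | _ N ih =>
    match N with
    | 0 =>
        intro x k h
        refine hUden m hm (k * m) x ?_
        push_cast
        simp only [pow_zero, mul_one] at h
        rw [h]
    | 1 =>
        intro x k h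
        exact hUden m hm k x (by simpa using h)
    | (N + 2) =>
        intro x k h
        have hy : ((((m : Zinv m) ^ 2 * x : Zinv m)) : ℚ) * m ^ N = k := by
          push_cast
          rw [← h]
          ring
        have hyH := ih N (by omega) _ k hy
        have e : Um m x = (matU m hm)⁻¹ * (Um m ((m : Zinv m) ^ 2 * x) * matU m hm) := by
          rw [← U_conj, inv_mul_cancel_left]
        rw [e]
        exact mul_mem (inv_mem (hU_mem m hm)) (mul_mem hyH (hU_mem m hm))

lemma hU_all (m : ℕ) (hm : 0 < m) (x : Zinv m) : Um m x ∈ HH m := by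
  obtain ⟨k, N, h⟩ := Zinv_rep m x
  exact hU_all_aux m hm N x k h

lemma hL_all (m : ℕ) (hm : 0 < m) (x : Zinv m) : Lm m x ∈ HH m := by
  have h := hLB m hm (-x) (hU_all m hm (-x))
  simpa using h


lemma emod_natAbs_lt (a b : ℤ) (h : b ≠ 0) : (a % b).natAbs < b.natAbs := by
  have h0 : 0 ≤ a % b := Int.emod_nonneg a h
  have h1 : a % b < b.natAbs := by
    rcases lt_or_gt_of_ne h with hb | hb
    · have := Int.emod_lt_of_pos a (b := -b) (by omega)
      rw [Int.emod_neg] at this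
      omega
    · have := Int.emod_lt_of_pos a hb
      omega
  omega

-- zero case identity
lemma zero_case (m : ℕ) (hm : 0 < m) (M : Matrix.SpecialLinearGroup (Fin 2) (Zinv m))
    (hc : M.1 1 0 = 0) : M ∈ HH m := by
  set a := M.1 0 0 with ha
  set b := M.1 0 1 with hb
  set d := M.1 1 1 with hd
  have hdet : a * d = 1 := by
    have h2 := M.2
    rw [Matrix.det_fin_two] at h2
    rw [hc] at h2
    simpa using h2
  have hM : (M : Matrix (Fin 2) (Fin 2) (Zinv m)) = !![a, b; 0, d] := by
    rw [Matrix.eta_fin_two (M : Matrix (Fin 2) (Fin 2) (Zinv m)), hc]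
  have hdetQ : (a : ℚ) * (d : ℚ) = 1 := by exact_mod_cast congrArg (Subtype.val) hdet
  have E : (M : Matrix.SpecialLinearGroup (Fin 2) (Zinv m)) * Um m (-(d * b)) * matB m
      = Um m a * Lm m (-d) * Um m a := by
    ext i j
    simp only [Matrix.SpecialLinearGroup.coe_mul]
    fin_cases i <;> fin_cases j <;>
      · simp [Um, Lm, matB, hM, Matrix.mul_apply, Fin.sum_univ_two]
        try exact Or.inl (by linear_combination hdetQ)
        try exact Or.inl (by linear_combination -hdetQ)
        try linear_combination ((b : ℚ) + 1) * hdetQ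
        try linear_combination hdetQ
        try linear_combination (b : ℚ) * hdetQ
        try linear_combination -hdetQ
        try linear_combination (a : ℚ) * hdetQ
  have e2 : M = Um m a * Lm m (-d) * Um m a * (matB m)⁻¹ * (Um m (-(d * b)))⁻¹ := by
    rw [← E]
    group
  rw [e2]
  exact mul_mem (mul_mem (mul_mem (mul_mem (hU_all m hm a) (hL_all m hm (-d)))
    (hU_all m hm a)) (inv_mem (hB_mem m hm))) (inv_mem (hU_all m hm _))

lemma main_aux (m : ℕ) (hm : 0 < m) :
    ∀ n : ℕ, ∀ M : Matrix.SpecialLinearGroup (Fin 2) (Zinv m), ∀ (p q : ℤ) (N : ℕ),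
      ((M.1 0 0 : ℚ) * m ^ N = p) → ((M.1 1 0 : ℚ) * m ^ N = q) → q.natAbs = n →
      M ∈ HH m := by
  intro n
  induction n using Nat.strong_induction_on with
  | _ n ih =>
    intro M p q N hp hq hqn
    rcases eq_or_ne q 0 with rfl | hq0
    · -- c = 0
      have hmN : ((m : ℚ) ^ N) ≠ 0 := by
        have : (m : ℚ) ≠ 0 := Nat.cast_ne_zero.2 hm.ne'
        positivity
      have hc : M.1 1 0 = 0 := by
        apply Subtype.ext
        have : (M.1 1 0 : ℚ) * m ^ N = 0 := by rw [hq]; simp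
        have := mul_eq_zero.1 this
        simpa [hmN] using this
      exact zero_case m hm M hc
    · -- Euclidean step
      set s : ℤ := p / q with hs
      set r : ℤ := p % q with hr
      have hpq : q * s + r = p := Int.mul_ediv_add_emod p q
      have hrlt : r.natAbs < n := by
        rw [← hqn]
        exact emod_natAbs_lt p q hq0
      set s' : Zinv m := (s : Zinv m) with hs'
      set M'' := Lm m s' * (matB m * M) with hM''
      have h00 : (M''.1 0 0) = M.1 1 0 := by
        simp only [hM'', Matrix.SpecialLinearGroup.coe_mul]
        simp [hM'', Lm, matB, Matrix.mul_apply, Fin.sum_univ_two, Matrix.vecMul,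
          dotProduct]
      have h10 : (M''.1 1 0) = s' * M.1 1 0 - M.1 0 0 := by
        simp only [hM'', Matrix.SpecialLinearGroup.coe_mul]
        simp [hM'', Lm, matB, Matrix.mul_apply, Fin.sum_univ_two, Matrix.vecMul,
          dotProduct]
        ring
      have hp'' : ((M''.1 0 0 : ℚ) * m ^ N = q) := by rw [h00]; exact hq
      have hq'' : ((M''.1 1 0 : ℚ) * m ^ N = ((-r : ℤ) : ℚ)) := by
        rw [h10]
        push_cast [hs']
        rw [sub_mul, mul_assoc, hq, hp]
        have hpq' : (q : ℚ) * s + r = p := by exact_mod_cast hpq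
        -- (cast already done)
        linarith [hpq']
      have hM''mem : M'' ∈ HH m :=
        ih r.natAbs hrlt M'' q (-r) N hp'' (by exact_mod_cast hq'') (by simp)
      have e : M = (matB m)⁻¹ * ((Lm m s')⁻¹ * M'') := by
        rw [hM'']
        group
      rw [e]
      exact mul_mem (inv_mem (hB_mem m hm)) (mul_mem (inv_mem (hL_all m hm s')) hM''mem)

theorem stmt_14 (m : ℕ) (hm : 0 < m) :
    Subgroup.closure {matA m, matQ m} = (⊤ : Subgroup (Matrix.SpecialLinearGroup (Fin 2) (Zinv m))) := by
  rw [eq_top_iff]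
  intro M _
  obtain ⟨p1, N1, h1⟩ := Zinv_rep m (M.1 0 0)
  obtain ⟨p2, N2, h2⟩ := Zinv_rep m (M.1 1 0)
  refine main_aux m hm ((p2 * m ^ N1).natAbs) M (p1 * m ^ N2) (p2 * m ^ N1) (N1 + N2) ?_ ?_ rfl
  · push_cast
    rw [pow_add, ← mul_assoc, h1]
  · push_cast
    rw [pow_add]
    rw [show (M.1 1 0 : ℚ) * ((m:ℚ) ^ N1 * (m:ℚ) ^ N2) = ((M.1 1 0 : ℚ) * (m:ℚ) ^ N2) * (m:ℚ) ^ N1 by ring, h2]
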